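/- arXiv:2510.03597 — 2 statements merged into one kernel-verified Lean document; each statement's English description precedes it below -/
import Mathlib

section
/- Let p be a positive natural number, and let K be a real symmetric p×p matrix such that K − m•I and M•I − K are positive semidefinite, where 0 < m ≤ M. Let a, b ∈ ℝᵖ be nonzero vectors and let D be a real p×p matrix with ‖D‖_op ≤ η₁. Define cosθ := ⟨a, K·b⟩ / (√⟨a, K·a⟩ · √⟨b, K·b⟩). If ⟨a, K·b⟩ < 0 and ‖a‖ < (m·‖b‖ / (M·(1 + η₁)))·(−cosθ), then ⟨a, K·a⟩ + ⟨a, K·b⟩ + ⟨a, K·(D·a)⟩ < 0. -/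
set_option maxHeartbeats 1000000


open scoped RealInnerProductSpace

/-- The `ℓ² → ℓ²` operator norm of a real square matrix. -/
noncomputable def l2OpNorm {p : ℕ} (A : Matrix (Fin p) (Fin p) ℝ) : ℝ :=
  ‖Matrix.toEuclideanCLM (𝕜 := ℝ) A‖

/-- Matrix-vector multiplication viewed as a map on Euclidean space. -/
def mv {p : ℕ} (A : Matrix (Fin p) (Fin p) ℝ) (x : EuclideanSpace ℝ (Fin p)) :
    EuclideanSpace ℝ (Fin p) := WithLp.toLp 2 (A.mulVec x)

lemma inner_mv_eq_dot {p : ℕ} (A : Matrix (Fin p) (Fin p) ℝ)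
    (x y : EuclideanSpace ℝ (Fin p)) :
    ⟪x, mv A y⟫ = dotProduct (x : Fin p → ℝ) (A.mulVec y) := by
  simp [mv, PiLp.inner_apply, dotProduct, mul_comm]

lemma mv_add {p : ℕ} (A : Matrix (Fin p) (Fin p) ℝ) (x y : EuclideanSpace ℝ (Fin p)) :
    mv A (x + y) = mv A x + mv A y := by
  simp only [mv]
  ext i
  simpa using congrFun (Matrix.mulVec_add A (x : Fin p → ℝ) (y : Fin p → ℝ)) i

lemma mv_smul {p : ℕ} (A : Matrix (Fin p) (Fin p) ℝ) (t : ℝ) (x : EuclideanSpace ℝ (Fin p)) :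
    mv A (t • x) = t • mv A x := by
  simp only [mv]
  ext i
  simpa using congrFun (Matrix.mulVec_smul A t (x : Fin p → ℝ)) i

/-- **Sufficient condition for anti-alignment (boxed condition of Theorem 1).**
If the whitened sampler bias `b` makes an obtuse `K`-angle with the whitened model error
`a`, and `‖a‖ < (m ‖b‖ / (M (1+η₁))) (−cos θ)`, then the whitened alignment scalar is
strictly negative, so negative extrapolation reduces the real-data risk. -/
theorem anti_alignment_sufficient
    {p : ℕ} (hp : 0 < p) (K : Matrix (Fin p) (Fin p) ℝ) (hKsymm : K.IsSymm)
    (m M : ℝ) (hm : 0 < m) (hmM : m ≤ M)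
    (hKlow : (K - m • (1 : Matrix (Fin p) (Fin p) ℝ)).PosSemidef)
    (hKhigh : ((M • (1 : Matrix (Fin p) (Fin p) ℝ)) - K).PosSemidef)
    (a b : EuclideanSpace ℝ (Fin p)) (ha : a ≠ 0) (hb : b ≠ 0)
    (D : Matrix (Fin p) (Fin p) ℝ) (η₁ : ℝ) (hD : l2OpNorm D ≤ η₁)
    (cosθ : ℝ)
    (hcos : cosθ = ⟪a, mv K b⟫ / (Real.sqrt ⟪a, mv K a⟫ * Real.sqrt ⟪b, mv K b⟫))
    (hobtuse : ⟪a, mv K b⟫ < 0)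
    (hsmall : ‖a‖ < (m * ‖b‖ / (M * (1 + η₁))) * (-cosθ)) :
    ⟪a, mv K a⟫ + ⟪a, mv K b⟫ + ⟪a, mv K (mv D a)⟫ < 0 := by
  have hM : (0:ℝ) < M := lt_of_lt_of_le hm hmM
  have hη₁ : (0:ℝ) ≤ η₁ := le_trans (norm_nonneg _) hD
  -- symmetry of the K-form
  have hsym : ∀ x y : EuclideanSpace ℝ (Fin p), ⟪x, mv K y⟫ = ⟪y, mv K x⟫ := by
    intro x y
    rw [inner_mv_eq_dot, inner_mv_eq_dot, Matrix.dotProduct_mulVec,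
      ← Matrix.mulVec_transpose, hKsymm.eq, dotProduct_comm]
  -- lower bound
  have hlow : ∀ x : EuclideanSpace ℝ (Fin p), m * ‖x‖ ^ 2 ≤ ⟪x, mv K x⟫ := by
    intro x
    have h := hKlow.dotProduct_mulVec_nonneg (x : Fin p → ℝ)
    have hx2 : ⟪x, x⟫ = ‖x‖ ^ 2 := real_inner_self_eq_norm_sq x
    have hdd : dotProduct (x : Fin p → ℝ) (x : Fin p → ℝ) = ‖x‖ ^ 2 := by
      rw [← hx2]; simp only [PiLp.inner_apply, dotProduct, RCLike.inner_apply, conj_trivial]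
    rw [star_trivial, Matrix.sub_mulVec, dotProduct_sub,
      Matrix.smul_mulVec, Matrix.one_mulVec, dotProduct_smul,
      smul_eq_mul, hdd, sub_nonneg] at h
    rw [inner_mv_eq_dot]
    exact h
  -- upper bound
  have hhigh : ∀ x : EuclideanSpace ℝ (Fin p), ⟪x, mv K x⟫ ≤ M * ‖x‖ ^ 2 := by
    intro x
    have h := hKhigh.dotProduct_mulVec_nonneg (x : Fin p → ℝ)
    have hx2 : ⟪x, x⟫ = ‖x‖ ^ 2 := real_inner_self_eq_norm_sq x
    have hdd : dotProduct (x : Fin p → ℝ) (x : Fin p → ℝ) = ‖x‖ ^ 2 := by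
      rw [← hx2]; simp only [PiLp.inner_apply, dotProduct, RCLike.inner_apply, conj_trivial]
    rw [star_trivial, Matrix.sub_mulVec, dotProduct_sub,
      Matrix.smul_mulVec, Matrix.one_mulVec, dotProduct_smul,
      smul_eq_mul, hdd, sub_nonneg] at h
    rw [inner_mv_eq_dot]
    exact h
  have hq0 : ∀ x : EuclideanSpace ℝ (Fin p), 0 ≤ ⟪x, mv K x⟫ := fun x =>
    le_trans (by positivity) (hlow x)
  -- Cauchy–Schwarz for the K-form via the discriminant
  have hCS : ∀ x y : EuclideanSpace ℝ (Fin p),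
      ⟪x, mv K y⟫ ^ 2 ≤ ⟪x, mv K x⟫ * ⟪y, mv K y⟫ := by
    intro x y
    have hquad : ∀ t : ℝ,
        0 ≤ ⟪y, mv K y⟫ * (t * t) + (2 * ⟪x, mv K y⟫) * t + ⟪x, mv K x⟫ := by
      intro t
      have h := hq0 (x + t • y)
      have hexp : ⟪x + t • y, mv K (x + t • y)⟫ =
          ⟪y, mv K y⟫ * (t * t) + (2 * ⟪x, mv K y⟫) * t + ⟪x, mv K x⟫ := by
        rw [mv_add, mv_smul]
        rw [inner_add_left, inner_add_right, inner_add_right,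
          real_inner_smul_left, real_inner_smul_left,
          real_inner_smul_right, real_inner_smul_right, hsym y x]
        ring
      linarith [hexp ▸ h]
    have hd := discrim_le_zero hquad
    rw [discrim] at hd
    nlinarith [hd]
  -- positivity of the quadratic values
  have hna : (0:ℝ) < ‖a‖ := norm_pos_iff.mpr ha
  have hnb : (0:ℝ) < ‖b‖ := norm_pos_iff.mpr hb
  have hqa : 0 < ⟪a, mv K a⟫ := lt_of_lt_of_le (by positivity) (hlow a)
  have hqb : 0 < ⟪b, mv K b⟫ := lt_of_lt_of_le (by positivity) (hlow b)
  set sa := Real.sqrt ⟪a, mv K a⟫ with hsa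
  set sb := Real.sqrt ⟪b, mv K b⟫ with hsb
  have hsa0 : 0 < sa := Real.sqrt_pos.mpr hqa
  have hsb0 : 0 < sb := Real.sqrt_pos.mpr hqb
  have hcos' : ⟪a, mv K b⟫ = cosθ * (sa * sb) := by
    rw [hcos]; field_simp
  have hcosneg : cosθ < 0 := by
    rw [hcos]
    exact div_neg_of_neg_of_pos hobtuse (by positivity)
  -- lower bounds on sa, sb
  have hsal : Real.sqrt m * ‖a‖ ≤ sa := by
    rw [hsa]
    have : Real.sqrt (m * ‖a‖ ^ 2) ≤ Real.sqrt ⟪a, mv K a⟫ :=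
      Real.sqrt_le_sqrt (hlow a)
    rwa [Real.sqrt_mul hm.le, Real.sqrt_sq hna.le] at this
  have hsbl : Real.sqrt m * ‖b‖ ≤ sb := by
    rw [hsb]
    have : Real.sqrt (m * ‖b‖ ^ 2) ≤ Real.sqrt ⟪b, mv K b⟫ :=
      Real.sqrt_le_sqrt (hlow b)
    rwa [Real.sqrt_mul hm.le, Real.sqrt_sq hnb.le] at this
  have hsqm : Real.sqrt m * Real.sqrt m = m := Real.mul_self_sqrt hm.le
  -- bound on the cross term
  have hab : ⟪a, mv K b⟫ ≤ -(m * ‖a‖ * ‖b‖ * (-cosθ)) := by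
    rw [hcos']
    have h1 : (Real.sqrt m * ‖a‖) * (Real.sqrt m * ‖b‖) ≤ sa * sb :=
      mul_le_mul hsal hsbl (by positivity) hsa0.le
    have h2 : m * ‖a‖ * ‖b‖ ≤ sa * sb := by
      have heq2 : (Real.sqrt m * ‖a‖) * (Real.sqrt m * ‖b‖) = m * ‖a‖ * ‖b‖ := by
        rw [mul_mul_mul_comm, hsqm, mul_assoc]
      rw [← heq2]; exact h1
    nlinarith [h2, hcosneg]
  -- bound on ‖D a‖
  have hDa : ‖mv D a‖ ≤ η₁ * ‖a‖ := by
    have heq : mv D a = Matrix.toEuclideanCLM (𝕜 := ℝ) D a := rfl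
    calc ‖mv D a‖ = ‖Matrix.toEuclideanCLM (𝕜 := ℝ) D a‖ := by rw [heq]
      _ ≤ ‖Matrix.toEuclideanCLM (𝕜 := ℝ) D‖ * ‖a‖ :=
          (Matrix.toEuclideanCLM (𝕜 := ℝ) D).le_opNorm a
      _ ≤ η₁ * ‖a‖ := mul_le_mul_of_nonneg_right hD (norm_nonneg a)
  -- bound on the third term
  have hT : ⟪a, mv K (mv D a)⟫ ≤ M * η₁ * ‖a‖ ^ 2 := by
    have h1 := hCS a (mv D a)
    have h2 : ⟪a, mv K a⟫ * ⟪mv D a, mv K (mv D a)⟫ ≤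
        (M * ‖a‖ ^ 2) * (M * ‖mv D a‖ ^ 2) :=
      mul_le_mul (hhigh a) (hhigh (mv D a)) (hq0 _) (by positivity)
    have h3 : ⟪a, mv K (mv D a)⟫ ^ 2 ≤ (M * ‖a‖ * ‖mv D a‖) ^ 2 := by
      nlinarith [h1, h2]
    have h4 : ⟪a, mv K (mv D a)⟫ ≤ M * ‖a‖ * ‖mv D a‖ := by
      have hnn : (0:ℝ) ≤ M * ‖a‖ * ‖mv D a‖ := by positivity
      nlinarith [h3, hnn]
    calc ⟪a, mv K (mv D a)⟫ ≤ M * ‖a‖ * ‖mv D a‖ := h4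
      _ ≤ M * ‖a‖ * (η₁ * ‖a‖) :=
          mul_le_mul_of_nonneg_left hDa (by positivity)
      _ = M * η₁ * ‖a‖ ^ 2 := by ring
  -- the smallness condition, rearranged
  have hden : (0:ℝ) < M * (1 + η₁) := by positivity
  have hsmall' : M * (1 + η₁) * ‖a‖ < m * ‖b‖ * (-cosθ) := by
    have : ‖a‖ < (m * ‖b‖ * (-cosθ)) / (M * (1 + η₁)) := by
      rw [div_mul_eq_mul_div] at hsmall; exact hsmall
    calc M * (1 + η₁) * ‖a‖ = ‖a‖ * (M * (1 + η₁)) := by ring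
      _ < (m * ‖b‖ * (-cosθ)) / (M * (1 + η₁)) * (M * (1 + η₁)) := by
          exact mul_lt_mul_of_pos_right this hden
      _ = m * ‖b‖ * (-cosθ) := by field_simp
  -- conclude
  have h1 := hhigh a
  have hmul := mul_lt_mul_of_pos_right hsmall' hna
  nlinarith [h1, hab, hT, hmul]
end

section
/- Let p be a positive natural number, and let K be a real symmetric p×p matrix such that K − m•I and M•I − K are positive semidefinite, where 0 < m ≤ M. Let a, b ∈ ℝᵖ be nonzero vectors and let D be a real p×p matrix with ℓ²→ℓ² operator norm ‖D‖_op ≤ η₁. Define cosθ := ⟨a, K·b⟩ / (√⟨a, K·a⟩ · √⟨b, K·b⟩). Then ⟨a, K·a⟩ + ⟨a, K·b⟩ + ⟨a, K·(D·a)⟩ ≥ (m − M·η₁)·‖a‖² − M·‖a‖·‖b‖·max(−cosθ, 0). -/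
open scoped RealInnerProductSpace
open Matrix

lemma inner_mv_eq {p : ℕ} (A : Matrix (Fin p) (Fin p) ℝ) (x y : EuclideanSpace ℝ (Fin p)) :
    ⟪x, mv A y⟫ = (x : Fin p → ℝ) ⬝ᵥ (A.mulVec y) := by
  simp [mv, PiLp.inner_apply, RCLike.inner_apply, dotProduct, mul_comm]

lemma mv_inner_eq {p : ℕ} (A : Matrix (Fin p) (Fin p) ℝ) (x y : EuclideanSpace ℝ (Fin p)) :
    ⟪mv A x, y⟫ = (A.mulVec x) ⬝ᵥ (y : Fin p → ℝ) := by
  simp [mv, PiLp.inner_apply, RCLike.inner_apply, dotProduct, mul_comm]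

lemma inner_self_dot {p : ℕ} (x : EuclideanSpace ℝ (Fin p)) :
    (x : Fin p → ℝ) ⬝ᵥ (x : Fin p → ℝ) = ‖x‖ ^ 2 := by
  rw [← real_inner_self_eq_norm_sq]
  simp only [PiLp.inner_apply, RCLike.inner_apply, dotProduct, conj_trivial]

/-- **Directional lower bound for the alignment scalar (whitened core).**
With `a` the whitened model error, `b` the whitened sampler bias, `D` the whitened
curvature tilt (`‖D‖ ≤ η₁`), and `m I ⪯ K ⪯ M I`, the whitened alignment scalar is
bounded below by `(m − M η₁) ‖a‖² − M ‖a‖ ‖b‖ max(−cos θ, 0)`. -/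
theorem alignment_lower_bound
    {p : ℕ} (hp : 0 < p) (K : Matrix (Fin p) (Fin p) ℝ) (hKsymm : K.IsSymm)
    (m M : ℝ) (hm : 0 < m) (hmM : m ≤ M)
    (hKlow : (K - m • (1 : Matrix (Fin p) (Fin p) ℝ)).PosSemidef)
    (hKhigh : ((M • (1 : Matrix (Fin p) (Fin p) ℝ)) - K).PosSemidef)
    (a b : EuclideanSpace ℝ (Fin p)) (ha : a ≠ 0) (hb : b ≠ 0)
    (D : Matrix (Fin p) (Fin p) ℝ) (η₁ : ℝ) (hD : l2OpNorm D ≤ η₁)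
    (cosθ : ℝ)
    (hcos : cosθ = ⟪a, mv K b⟫ / (Real.sqrt ⟪a, mv K a⟫ * Real.sqrt ⟪b, mv K b⟫)) :
    (m - M * η₁) * ‖a‖ ^ 2 - M * ‖a‖ * ‖b‖ * max (-cosθ) 0
      ≤ ⟪a, mv K a⟫ + ⟪a, mv K b⟫ + ⟪a, mv K (mv D a)⟫ := by
  have hM0 : (0:ℝ) ≤ M := le_trans hm.le hmM
  have hη : (0:ℝ) ≤ η₁ := le_trans (norm_nonneg _) hD
  -- lower and upper bounds for the quadratic form
  have hlow : ∀ x : EuclideanSpace ℝ (Fin p), m * ‖x‖ ^ 2 ≤ ⟪x, mv K x⟫ := by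
    intro x
    have h := hKlow.dotProduct_mulVec_nonneg x
    simp only [Matrix.sub_mulVec, Matrix.smul_mulVec, Matrix.one_mulVec, star_trivial,
      dotProduct_sub, dotProduct_smul, smul_eq_mul] at h
    rw [inner_mv_eq]
    have hx := inner_self_dot x
    rw [hx] at h
    nlinarith [h]
  have hhigh : ∀ x : EuclideanSpace ℝ (Fin p), ⟪x, mv K x⟫ ≤ M * ‖x‖ ^ 2 := by
    intro x
    have h := hKhigh.dotProduct_mulVec_nonneg x
    simp only [Matrix.sub_mulVec, Matrix.smul_mulVec, Matrix.one_mulVec, star_trivial,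
      dotProduct_sub, dotProduct_smul, smul_eq_mul] at h
    rw [inner_mv_eq]
    have hx := inner_self_dot x
    rw [hx] at h
    nlinarith [h]
  -- K is positive semidefinite
  have hK0 : K.PosSemidef := by
    refine .of_dotProduct_mulVec_nonneg ?_ ?_
    · rw [Matrix.IsHermitian, Matrix.conjTranspose_eq_transpose_of_trivial]
      exact hKsymm
    · intro x
      have h := hKlow.dotProduct_mulVec_nonneg x
      simp only [Matrix.sub_mulVec, Matrix.smul_mulVec, Matrix.one_mulVec, star_trivial,
        dotProduct_sub, dotProduct_smul, smul_eq_mul] at h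
      have hx : (0:ℝ) ≤ x ⬝ᵥ x := Finset.sum_nonneg fun i _ => mul_self_nonneg _
      simp only [star_trivial]
      nlinarith
  open scoped MatrixOrder in
  set S := CFC.sqrt K with hSdef
  open scoped MatrixOrder in
  have hSS : S * S = K := CFC.sqrt_mul_sqrt_self K hK0.nonneg
  have hSsymm : Sᵀ = S := by
    open scoped MatrixOrder in
    have h := (CFC.sqrt_nonneg K).posSemidef.1
    rwa [Matrix.IsHermitian, Matrix.conjTranspose_eq_transpose_of_trivial] at h
  have hKfactor : ∀ x y : EuclideanSpace ℝ (Fin p), ⟪x, mv K y⟫ = ⟪mv S x, mv S y⟫ := by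
    intro x y
    rw [inner_mv_eq, mv_inner_eq]
    show (x : Fin p → ℝ) ⬝ᵥ K.mulVec y = S.mulVec x ⬝ᵥ (S.mulVec y)
    rw [← hSS, ← Matrix.mulVec_mulVec, dotProduct_mulVec, ← Matrix.mulVec_transpose, hSsymm]
  -- Cauchy–Schwarz in the K-geometry
  have hCS : ∀ x y : EuclideanSpace ℝ (Fin p),
      |⟪x, mv K y⟫| ≤ Real.sqrt ⟪x, mv K x⟫ * Real.sqrt ⟪y, mv K y⟫ := by
    intro x y
    rw [hKfactor x y, hKfactor x x, hKfactor y y,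
      real_inner_self_eq_norm_sq, real_inner_self_eq_norm_sq,
      Real.sqrt_sq (norm_nonneg _), Real.sqrt_sq (norm_nonneg _)]
    exact abs_real_inner_le_norm _ _
  have hsq : ∀ x : EuclideanSpace ℝ (Fin p),
      Real.sqrt ⟪x, mv K x⟫ ≤ Real.sqrt M * ‖x‖ := by
    intro x
    calc Real.sqrt ⟪x, mv K x⟫ ≤ Real.sqrt (M * ‖x‖ ^ 2) := Real.sqrt_le_sqrt (hhigh x)
    _ = Real.sqrt M * ‖x‖ := by
        rw [Real.sqrt_mul hM0, Real.sqrt_sq (norm_nonneg _)]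
  -- bound on ‖D a‖
  have hDa : ‖mv D a‖ ≤ η₁ * ‖a‖ := by
    have heq : mv D a = Matrix.toEuclideanCLM (𝕜 := ℝ) D a := rfl
    rw [heq]
    calc ‖Matrix.toEuclideanCLM (𝕜 := ℝ) D a‖
        ≤ ‖Matrix.toEuclideanCLM (𝕜 := ℝ) D‖ * ‖a‖ := ContinuousLinearMap.le_opNorm _ _
    _ ≤ η₁ * ‖a‖ := mul_le_mul_of_nonneg_right hD (norm_nonneg _)
  -- third term bound
  have hMM : Real.sqrt M * Real.sqrt M = M := Real.mul_self_sqrt hM0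
  have ht3 : -(M * η₁ * ‖a‖ ^ 2) ≤ ⟪a, mv K (mv D a)⟫ := by
    have h := hCS a (mv D a)
    have h1 : Real.sqrt ⟪a, mv K a⟫ * Real.sqrt ⟪mv D a, mv K (mv D a)⟫
        ≤ (Real.sqrt M * ‖a‖) * (Real.sqrt M * (η₁ * ‖a‖)) := by
      apply mul_le_mul (hsq a) _ (Real.sqrt_nonneg _) (by positivity)
      calc Real.sqrt ⟪mv D a, mv K (mv D a)⟫ ≤ Real.sqrt M * ‖mv D a‖ := hsq _
      _ ≤ Real.sqrt M * (η₁ * ‖a‖) :=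
          mul_le_mul_of_nonneg_left hDa (Real.sqrt_nonneg _)
    have h2 : (Real.sqrt M * ‖a‖) * (Real.sqrt M * (η₁ * ‖a‖)) = M * η₁ * ‖a‖ ^ 2 := by
      calc (Real.sqrt M * ‖a‖) * (Real.sqrt M * (η₁ * ‖a‖))
          = (Real.sqrt M * Real.sqrt M) * (η₁ * ‖a‖ ^ 2) := by ring
      _ = M * η₁ * ‖a‖ ^ 2 := by rw [hMM]; ring
    rw [h2] at h1
    linarith [neg_abs_le ⟪a, mv K (mv D a)⟫, h, h1]
  -- positivity of the diagonal terms
  have ha' : 0 < ‖a‖ := norm_pos_iff.mpr ha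
  have hb' : 0 < ‖b‖ := norm_pos_iff.mpr hb
  have hqa : 0 < ⟪a, mv K a⟫ :=
    lt_of_lt_of_le (mul_pos hm (pow_pos ha' 2)) (hlow a)
  have hqb : 0 < ⟪b, mv K b⟫ :=
    lt_of_lt_of_le (mul_pos hm (pow_pos hb' 2)) (hlow b)
  set d := Real.sqrt ⟪a, mv K a⟫ * Real.sqrt ⟪b, mv K b⟫ with hddef
  have hd0 : 0 < d := mul_pos (Real.sqrt_pos.mpr hqa) (Real.sqrt_pos.mpr hqb)
  have hab : ⟪a, mv K b⟫ = cosθ * d := by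
    rw [hcos, div_mul_cancel₀ _ hd0.ne']
  have hdM : d ≤ M * ‖a‖ * ‖b‖ := by
    calc d ≤ (Real.sqrt M * ‖a‖) * (Real.sqrt M * ‖b‖) :=
        mul_le_mul (hsq a) (hsq b) (Real.sqrt_nonneg _) (by positivity)
    _ = (Real.sqrt M * Real.sqrt M) * (‖a‖ * ‖b‖) := by ring
    _ = M * ‖a‖ * ‖b‖ := by rw [hMM]; ring
  have hla := hlow a
  rcases le_or_gt 0 cosθ with hc | hc
  · rw [max_eq_right (by linarith : -cosθ ≤ (0:ℝ))]
    have hv : 0 ≤ ⟪a, mv K b⟫ := by rw [hab]; positivity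
    nlinarith
  · rw [max_eq_left (by linarith : (0:ℝ) ≤ -cosθ)]
    have hv : cosθ * (M * ‖a‖ * ‖b‖) ≤ ⟪a, mv K b⟫ := by
      rw [hab]
      exact mul_le_mul_of_nonpos_left hdM hc.le
    nlinarith
end
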